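/- arXiv:hep-th/9511049 — 3 statements merged into one kernel-verified Lean document; each statement's English description precedes it below -/
import Mathlib

section
/- For all real numbers p ≥ q > 0, if c = 1 − 6·(√(p/q) − √(q/p))², then 6·β(c) = 3·(1 − 2·p/q), where β(c) = −(1/12)·(7 − c + √((1 − c)·(25 − c))) with √ the real square root. (In particular (1 − c)·(25 − c) ≥ 0, so the square root is genuine.) -/
/-- The coefficient β of ∂²C in the BRST current of the bosonic string, as a
function of the matter central charge c: β(c) = −(1/12)·(7 − c + √((1 − c)·(25 − c))). -/
noncomputable def betaCoeff (c : ℝ) : ℝ :=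
  -(1/12) * (7 - c + Real.sqrt ((1 - c) * (25 - c)))

/-- For the Virasoro minimal-model matter sector c = 1 − 6(√(p/q) − √(q/p))² with
p ≥ q > 0, the N=2 central charge is c_{N=2} = 6·β(c) = 3·(1 − 2p/q); in particular
(1 − c)·(25 − c) ≥ 0, so the square root is genuine. -/
theorem minimal_model_cN2 (p q : ℝ) (hq : 0 < q) (hpq : q ≤ p) (c : ℝ)
    (hc : c = 1 - 6 * (Real.sqrt (p / q) - Real.sqrt (q / p)) ^ 2) :
    0 ≤ (1 - c) * (25 - c) ∧ 6 * betaCoeff c = 3 * (1 - 2 * p / q) := by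
  have hp : 0 < p := hq.trans_le hpq
  set t := Real.sqrt (p / q) with htdef
  set u := Real.sqrt (q / p) with hudef
  have ht2 : t ^ 2 = p / q := Real.sq_sqrt (by positivity)
  have hu2 : u ^ 2 = q / p := Real.sq_sqrt (by positivity)
  have htu : t * u = 1 := by
    rw [htdef, hudef, ← Real.sqrt_mul (by positivity),
      show p / q * (q / p) = 1 by field_simp, Real.sqrt_one]
  have hut : u ≤ t := Real.sqrt_le_sqrt (by rw [div_le_div_iff₀ hp hq]; nlinarith)
  have key : (1 - c) * (25 - c) = (6 * (t - u) * (t + u)) ^ 2 := by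
    rw [hc]; linear_combination (-144 * (t - u) ^ 2) * htu
  have hnn : 0 ≤ 6 * (t - u) * (t + u) := by
    have hu0 : 0 ≤ u := Real.sqrt_nonneg _
    nlinarith
  have hs : Real.sqrt ((1 - c) * (25 - c)) = 6 * (t - u) * (t + u) := by
    rw [key, Real.sqrt_sq hnn]
  refine ⟨by rw [key]; positivity, ?_⟩
  unfold betaCoeff
  rw [hs, hc]
  linear_combination 6 * htu - 6 * ht2
end

section
/- With the second normalization of the diagonal sl(2|1) in sl(4|3), the fermionic element W = e 5 4 + e 1 7 is a highest weight of a (b,j) = (3/2, 1/2) representation: setting H = (1/2)(e 1 1 − e 2 2) + (1/2)(e 3 3 − e 4 4), E₊ = e 1 2 + e 3 4, Y' = (1/2)(e 1 1 + e 2 2 + 2·e 5 5) − (1/2)(e 3 3 + e 4 4 + 2·e 7 7), F'₊₊ = e 5 2 − e 3 7, F'₊₋ = e 1 5 − e 7 4, one has ⁅H, W⁆ = (1/2)·W, ⁅Y', W⁆ = (3/2)·W, ⁅E₊, W⁆ = 0, {F'₊₊, W} = 0, {F'₊₋, W} = 0. (This representation is absent in the first normalization.) -/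
noncomputable section

open Fin.NatCast

/-- Matrix unit with 1-based indices 1..7 inside sl(4|3), realized as 7×7 complex
matrices (rows/columns 1–4 bosonic, 5–7 fermionic). -/
def e (i j : ℕ) : Matrix (Fin 7) (Fin 7) ℂ :=
  Matrix.single ((i - 1 : ℕ) : Fin 7) ((j - 1 : ℕ) : Fin 7) 1

/-- Anticommutator {X, Y} = X*Y + Y*X. -/
def ac (X Z : Matrix (Fin 7) (Fin 7) ℂ) : Matrix (Fin 7) (Fin 7) ℂ := X * Z + Z * X

/-- Cartan generator H of the diagonal sl(2|1) in 2·sl(2|1) ⊂ sl(4|3). -/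
def H : Matrix (Fin 7) (Fin 7) ℂ :=
  ((1 : ℂ)/2) • (e 1 1 - e 2 2) + ((1 : ℂ)/2) • (e 3 3 - e 4 4)
/-- Raising generator E₊ of the diagonal sl(2|1). -/
def Ep : Matrix (Fin 7) (Fin 7) ℂ := e 1 2 + e 3 4
/-- u(1) generator Y' of the diagonal sl(2|1) (second normalization). -/
def Y' : Matrix (Fin 7) (Fin 7) ℂ :=
  ((1 : ℂ)/2) • (e 1 1 + e 2 2 + (2 : ℂ) • e 5 5) -
    ((1 : ℂ)/2) • (e 3 3 + e 4 4 + (2 : ℂ) • e 7 7)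
/-- Fermionic raising generator F'₊₊ (second normalization). -/
def Fpp' : Matrix (Fin 7) (Fin 7) ℂ := e 5 2 - e 3 7
/-- Fermionic raising generator F'₊₋ (second normalization). -/
def Fpm' : Matrix (Fin 7) (Fin 7) ℂ := e 1 5 - e 7 4


lemma e_mul_e_same (i j k l : ℕ) (h : ((j - 1 : ℕ) : Fin 7) = ((k - 1 : ℕ) : Fin 7)) :
    e i j * e k l = e i l := by
  unfold e; rw [h, Matrix.single_mul_single_same, one_mul]

lemma e_mul_e_ne (i j k l : ℕ) (h : ¬ ((j - 1 : ℕ) : Fin 7) = ((k - 1 : ℕ) : Fin 7)) :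
    e i j * e k l = 0 := Matrix.single_mul_single_of_ne (h := h) (d := 1) ..

/-- With the second normalization of the diagonal sl(2|1) in sl(4|3), the fermionic
element W = e₅₄ + e₁₇ is a highest weight of a (b,j) = (3/2, 1/2) representation. -/

theorem W_highest_weight_three_half_one_half :
    ⁅H, e 5 4 + e 1 7⁆ = ((1 : ℂ)/2) • (e 5 4 + e 1 7) ∧
    ⁅Y', e 5 4 + e 1 7⁆ = ((3 : ℂ)/2) • (e 5 4 + e 1 7) ∧
    ⁅Ep, e 5 4 + e 1 7⁆ = 0 ∧
    ac Fpp' (e 5 4 + e 1 7) = 0 ∧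
    ac Fpm' (e 5 4 + e 1 7) = 0 := by
  refine ⟨?_, ?_, ?_, ?_, ?_⟩ <;>
  · simp only [H, Y', Ep, Fpp', Fpm', ac, Ring.lie_def, mul_add, add_mul, sub_mul,
      mul_sub, smul_mul_assoc, mul_smul_comm]
    simp (config := { decide := true }) only [e_mul_e_same, e_mul_e_ne]
    module
end
end

section
/- Stringy grading of sl(n|n+1): let n ≥ 1 and work in Matrix (Fin (2n+1)) (Fin (2n+1)) ℚ. Let e₀ be the diagonal matrix with entries (e₀)_{kk} = n − 1 − 2k for 0 ≤ k ≤ n−1 and (e₀)_{kk} = 3n − 2k for n ≤ k ≤ 2n, let u₀ be the diagonal matrix with entries −(n+1) for 0 ≤ k ≤ n−1 and −n for n ≤ k ≤ 2n, and let D = (1/2)·e₀ + n·u₀, with diagonal entries d(k). Then for all k, l: ⁅D, E k l⁆ = (d(k) − d(l))·(E k l), and d(k) − d(l) > 0 if and only if (k < l and l ≤ n−1) or (n ≤ k and k < l) or (n ≤ k and l ≤ n−1). Hence the strictly positively graded part of sl(n|n+1) for this grading is spanned by the E k l with either both indices bosonic and k < l, or both fermionic and k < l, or k fermionic and l bosonic.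 -/
lemma lie_diag_stdBasis (m : ℕ) (f : Fin m → ℚ) (k l : Fin m) :
    ⁅Matrix.diagonal f, Matrix.single k l (1 : ℚ)⁆
      = (f k - f l) • Matrix.single k l 1 := by
  ext i j
  simp only [Ring.lie_def, Matrix.sub_apply, Matrix.diagonal_mul, Matrix.mul_diagonal,
    Matrix.smul_apply, Matrix.single, Matrix.of_apply, smul_eq_mul]
  by_cases hik : k = i <;> by_cases hjl : l = j <;> simp [hik, hjl] <;> ring

/-- Stringy grading of sl(n|n+1): with e₀, u₀ the Cartan generators of the principal
sl(2|1) subalgebra in the fundamental representation (indices 0..n−1 bosonic,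
n..2n fermionic) and D = (1/2)·e₀ + n·u₀ with diagonal d, ad D grades the matrix
units by d(k) − d(l), and the grade is strictly positive iff (k < l and l ≤ n−1) or
(n ≤ k and k < l) or (n ≤ k and l ≤ n−1).  Hence the strictly positively graded part
of sl(n|n+1) is spanned by the E k l with both indices bosonic and k < l, both
fermionic and k < l, or k fermionic and l bosonic. -/
theorem stringy_grading_sl_n_np1 (n : ℕ) (hn : 1 ≤ n)
    (e0 u0 D : Matrix (Fin (2 * n + 1)) (Fin (2 * n + 1)) ℚ)
    (he0 : e0 = Matrix.diagonal fun k : Fin (2 * n + 1) =>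
      if (k : ℕ) ≤ n - 1 then (n : ℚ) - 1 - 2 * (k : ℕ) else 3 * (n : ℚ) - 2 * (k : ℕ))
    (hu0 : u0 = Matrix.diagonal fun k : Fin (2 * n + 1) =>
      if (k : ℕ) ≤ n - 1 then -((n : ℚ) + 1) else -(n : ℚ))
    (hD : D = ((1 : ℚ)/2) • e0 + (n : ℚ) • u0)
    (d : Fin (2 * n + 1) → ℚ) (hd : ∀ k, d k = D k k) :
    (∀ k l : Fin (2 * n + 1),
      ⁅D, Matrix.single k l (1 : ℚ)⁆ = (d k - d l) • Matrix.single k l 1) ∧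
    (∀ k l : Fin (2 * n + 1), 0 < d k - d l ↔
      ((k < l ∧ (l : ℕ) ≤ n - 1) ∨ (n ≤ (k : ℕ) ∧ k < l) ∨
        (n ≤ (k : ℕ) ∧ (l : ℕ) ≤ n - 1))) := by
  have hDdiag : D = Matrix.diagonal (fun k : Fin (2 * n + 1) =>
      if (k : ℕ) ≤ n - 1 then
        (1/2) * ((n : ℚ) - 1 - 2 * (k : ℕ)) + (n : ℚ) * (-((n : ℚ) + 1))
      else (1/2) * (3 * (n : ℚ) - 2 * (k : ℕ)) + (n : ℚ) * (-(n : ℚ))) := by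
    subst he0 hu0 hD
    ext i j
    by_cases hij : i = j <;>
      simp [Matrix.diagonal_apply, hij] <;> split <;> ring
  have hdval : ∀ k : Fin (2 * n + 1), d k =
      if (k : ℕ) ≤ n - 1 then
        (1/2) * ((n : ℚ) - 1 - 2 * (k : ℕ)) + (n : ℚ) * (-((n : ℚ) + 1))
      else (1/2) * (3 * (n : ℚ) - 2 * (k : ℕ)) + (n : ℚ) * (-(n : ℚ)) := by
    intro k
    rw [hd, hDdiag, Matrix.diagonal_apply_eq]
  constructor
  · intro k l
    rw [hDdiag, lie_diag_stdBasis, hd k, hd l, hDdiag,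
      Matrix.diagonal_apply_eq, Matrix.diagonal_apply_eq]
  · intro k l
    have hk2 := k.isLt
    have hl2 := l.isLt
    have hnq : (1 : ℚ) ≤ (n : ℚ) := by exact_mod_cast hn
    rw [hdval k, hdval l, Fin.lt_def]
    by_cases hk : (k : ℕ) ≤ n - 1 <;> by_cases hl : (l : ℕ) ≤ n - 1
    · rw [if_pos hk, if_pos hl]
      constructor
      · intro h
        have hkl : (k : ℕ) < (l : ℕ) := by
          have : ((k : ℕ) : ℚ) < ((l : ℕ) : ℚ) := by linarith
          exact_mod_cast this
        exact Or.inl ⟨hkl, hl⟩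
      · rintro (⟨h1, _⟩ | ⟨h1, h2⟩ | ⟨h1, _⟩)
        · have : ((k : ℕ) : ℚ) < ((l : ℕ) : ℚ) := by exact_mod_cast h1
          linarith
        · exact absurd hk (by omega)
        · exact absurd hk (by omega)
    · rw [if_pos hk, if_neg hl]
      constructor
      · intro h
        exfalso
        have hkq : ((k : ℕ) : ℚ) ≥ 0 := by positivity
        have hlq : ((l : ℕ) : ℚ) ≤ 2 * n := by exact_mod_cast (by omega : (l : ℕ) ≤ 2 * n)
        linarith
      · rintro (⟨_, h2⟩ | ⟨h1, _⟩ | ⟨h1, h2⟩)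
        · exact absurd h2 hl
        · exact absurd h1 (by omega)
        · exact absurd h2 hl
    · rw [if_neg hk, if_pos hl]
      refine iff_of_true ?_ (Or.inr (Or.inr ⟨by omega, hl⟩))
      have hkq : ((k : ℕ) : ℚ) ≤ 2 * n := by exact_mod_cast (by omega : (k : ℕ) ≤ 2 * n)
      have hlq : ((l : ℕ) : ℚ) ≥ 0 := by positivity
      linarith
    · rw [if_neg hk, if_neg hl]
      constructor
      · intro h
        have hkl : (k : ℕ) < (l : ℕ) := by
          have : ((k : ℕ) : ℚ) < ((l : ℕ) : ℚ) := by linarith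
          exact_mod_cast this
        exact Or.inr (Or.inl ⟨by omega, hkl⟩)
      · rintro (⟨_, h2⟩ | ⟨_, h2⟩ | ⟨_, h2⟩)
        · exact absurd h2 hl
        · have : ((k : ℕ) : ℚ) < ((l : ℕ) : ℚ) := by exact_mod_cast h2
          linarith
        · exact absurd h2 hl
end
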